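/- arXiv:1802.07757 — 4 statements merged into one kernel-verified Lean document; each statement's English description precedes it below -/
import Mathlib

section
/- Let w be a classical solution of the homogeneous heat equation with homogeneous Dirichlet boundary conditions on a nonempty bounded open set Ω ⊂ ℝ^d over the time interval [0,T] with diffusion coefficient a > 0. Then for every t ∈ [0,T] and every x in the closure of Ω, |w(t,x)| ≤ sup_{y ∈ closure(Ω)} |w(0,y)|. (This is the maximum-principle bound ‖e^{tΔ}w₀‖_{L^∞(Ω)} ≤ ‖w₀‖_{L^∞(Ω)} of Theorem 3.1, stated for classical solutions.) -/
open Set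

/-- The Laplacian of a function `u : ℝ^d → ℝ`, defined as the sum of the second
directional derivatives along the standard basis directions. -/
noncomputable def heatLaplacian {d : ℕ} (u : EuclideanSpace ℝ (Fin d) → ℝ)
    (x : EuclideanSpace ℝ (Fin d)) : ℝ :=
  ∑ i : Fin d,
    fderiv ℝ (fun y => fderiv ℝ u y (EuclideanSpace.single i (1 : ℝ))) x
      (EuclideanSpace.single i (1 : ℝ))

/-- `w` is a classical solution of the homogeneous heat equation `∂ₜ w = a Δ w` on `Ω`
over the time interval `[0, T]`, with homogeneous Dirichlet boundary conditions. -/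
structure IsClassicalHeatSolution {d : ℕ} (Ω : Set (EuclideanSpace ℝ (Fin d))) (a T : ℝ)
    (w : ℝ → EuclideanSpace ℝ (Fin d) → ℝ) : Prop where
  continuousOn :
    ContinuousOn (fun p : ℝ × EuclideanSpace ℝ (Fin d) => w p.1 p.2)
      (Icc 0 T ×ˢ closure Ω)
  space_smooth : ∀ t ∈ Ioc 0 T, ∀ x ∈ Ω, ∃ U ∈ nhds x, ContDiffOn ℝ 2 (w t) U
  heat_eq : ∀ t ∈ Ioc 0 T, ∀ x ∈ Ω,
    HasDerivAt (fun τ => w τ x) (a * heatLaplacian (w t) x) t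
  boundary : ∀ t ∈ Icc 0 T, ∀ x ∈ frontier Ω, w t x = 0

/-- If `f` has a local max at `0`, is differentiable near `0` with derivative `f'`,
and `f'` has derivative `c` at `0`, then `c ≤ 0`. -/
lemma heat_second_deriv_nonpos_of_isLocalMax {f f' : ℝ → ℝ} {c : ℝ}
    (hf : ∀ᶠ s in nhds (0:ℝ), HasDerivAt f (f' s) s)
    (hmax : IsLocalMax f 0) (hf' : HasDerivAt f' c 0) : c ≤ 0 := by
  by_contra hc
  push_neg at hc
  have hf'0 : f' 0 = 0 := hmax.hasDerivAt_eq_zero hf.self_of_nhds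
  rw [hasDerivAt_iff_tendsto_slope] at hf'
  have h1 : Filter.Tendsto (slope f' 0) (nhdsWithin 0 (Ioi 0)) (nhds c) :=
    hf'.mono_left (nhdsWithin_mono _ fun s hs => ne_of_gt hs)
  have hpos : ∀ᶠ s in nhdsWithin (0:ℝ) (Ioi 0), 0 < f' s := by
    filter_upwards [h1.eventually_const_lt hc, self_mem_nhdsWithin] with s hs hs0
    rw [slope_def_field, hf'0, sub_zero, sub_zero] at hs
    have : 0 < f' s / s * s := mul_pos hs hs0
    rwa [div_mul_cancel₀ _ (ne_of_gt hs0)] at this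
  rw [eventually_nhdsWithin_iff] at hpos
  have hall : ∀ᶠ s in nhds (0:ℝ),
      (HasDerivAt f (f' s) s ∧ f s ≤ f 0) ∧ (s ∈ Ioi 0 → 0 < f' s) :=
    (hf.and hmax).and hpos
  obtain ⟨δ, hδ, hball⟩ := Metric.eventually_nhds_iff.mp hall
  have hδ2 : 0 < δ / 2 := by linarith
  have hmem : ∀ s ∈ Icc (0:ℝ) (δ/2), dist s 0 < δ := by
    intro s hs
    rw [Real.dist_eq, sub_zero, abs_of_nonneg hs.1]
    linarith [hs.2]
  have hmono : StrictMonoOn f (Icc 0 (δ/2)) := by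
    apply strictMonoOn_of_deriv_pos (convex_Icc _ _)
    · exact fun s hs => ((hball (hmem s hs)).1.1.continuousAt).continuousWithinAt
    · intro s hs
      rw [interior_Icc] at hs
      have h := hball (hmem s ⟨hs.1.le, hs.2.le⟩)
      rw [h.1.1.deriv]
      exact h.2 hs.1
  have h01 : f 0 < f (δ/2) :=
    hmono ⟨le_refl 0, hδ2.le⟩ ⟨hδ2.le, le_refl _⟩ hδ2
  have := (hball (hmem (δ/2) ⟨hδ2.le, le_refl _⟩)).1.2
  linarith

/-- The Laplacian at an interior local maximum of a C² function is nonpositive. -/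
lemma heatLaplacian_nonpos_of_isLocalMax {d : ℕ} {u : EuclideanSpace ℝ (Fin d) → ℝ}
    {x₀ : EuclideanSpace ℝ (Fin d)} {U : Set (EuclideanSpace ℝ (Fin d))}
    (hU : U ∈ nhds x₀) (hsm : ContDiffOn ℝ 2 u U) (hmax : IsLocalMax u x₀) :
    heatLaplacian u x₀ ≤ 0 := by
  have hVopen : IsOpen (interior U) := isOpen_interior
  have hx₀V : x₀ ∈ interior U := mem_interior_iff_mem_nhds.2 hU
  have hsmoothAt : ∀ x ∈ interior U, ContDiffAt ℝ 2 u x := fun x hx =>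
    (hsm.mono interior_subset).contDiffAt (hVopen.mem_nhds hx)
  apply Finset.sum_nonpos
  intro i _
  set e : EuclideanSpace ℝ (Fin d) := EuclideanSpace.single i (1:ℝ) with he
  set L : ℝ → EuclideanSpace ℝ (Fin d) := fun s => x₀ + s • e with hLdef
  have hL : ∀ s, HasDerivAt L e s := by
    intro s
    simpa [hLdef] using ((hasDerivAt_id s).smul_const e).const_add x₀
  have hL0 : L 0 = x₀ := by simp [hLdef]
  have hLtend : Filter.Tendsto L (nhds 0) (nhds x₀) := by
    have := (hL 0).continuousAt.tendsto
    rwa [hL0] at this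
  have hgmax : IsLocalMax (fun s => u (L s)) 0 := by
    have h := hLtend.eventually hmax
    unfold IsLocalMax IsMaxFilter
    simpa [hL0] using h
  have hVev : ∀ᶠ s in nhds (0:ℝ), L s ∈ interior U :=
    hLtend.eventually_mem (hVopen.mem_nhds hx₀V)
  set φ : ℝ → ℝ := fun s => fderiv ℝ u (L s) e with hφdef
  have hgderiv : ∀ᶠ s in nhds (0:ℝ), HasDerivAt (fun s => u (L s)) (φ s) s := by
    filter_upwards [hVev] with s hs
    have hdiff : DifferentiableAt ℝ u (L s) :=
      (hsmoothAt _ hs).differentiableAt (by norm_num)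
    exact hdiff.hasFDerivAt.comp_hasDerivAt s (hL s)
  have hd2 : DifferentiableAt ℝ (fun y => fderiv ℝ u y e) x₀ := by
    have h1 : ContDiffAt ℝ 1 (fderiv ℝ u) x₀ :=
      (hsmoothAt x₀ hx₀V).fderiv_right (by norm_num)
    exact (h1.differentiableAt (by norm_num)).clm_apply (differentiableAt_const e)
  have hφderiv : HasDerivAt φ (fderiv ℝ (fun y => fderiv ℝ u y e) x₀ e) 0 := by
    have h := hd2.hasFDerivAt
    rw [← hL0] at h
    have h2 := h.comp_hasDerivAt 0 (hL 0)
    rw [hL0] at h2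
    exact h2
  exact heat_second_deriv_nonpos_of_isLocalMax hgderiv hgmax hφderiv

lemma heatLaplacian_neg {d : ℕ} (u : EuclideanSpace ℝ (Fin d) → ℝ)
    (x : EuclideanSpace ℝ (Fin d)) :
    heatLaplacian (fun y => -u y) x = -heatLaplacian u x := by
  unfold heatLaplacian
  rw [← Finset.sum_neg_distrib]
  apply Finset.sum_congr rfl
  intro i _
  have h1 : (fun y => fderiv ℝ (fun z => -u z) y (EuclideanSpace.single i (1:ℝ)))
      = fun y => -(fderiv ℝ u y (EuclideanSpace.single i (1:ℝ))) := by
    funext y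
    rw [fderiv_fun_neg]
    simp
  rw [h1, fderiv_fun_neg]
  simp

/-- One-sided maximum principle. -/
lemma heat_max_principle_one_sided {d : ℕ}
    (Ω : Set (EuclideanSpace ℝ (Fin d))) (hΩopen : IsOpen Ω)
    (hΩbdd : Bornology.IsBounded Ω) (hΩne : Ω.Nonempty)
    (a T : ℝ) (ha : 0 < a) (hT : 0 < T)
    (w : ℝ → EuclideanSpace ℝ (Fin d) → ℝ)
    (hw : IsClassicalHeatSolution Ω a T w) :
    ∀ t ∈ Icc 0 T, ∀ x ∈ closure Ω,
      w t x ≤ ⨆ y : closure Ω, |w 0 (y : EuclideanSpace ℝ (Fin d))| := by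
  obtain ⟨y₀, hy₀Ω⟩ := hΩne
  have hy₀ : y₀ ∈ closure Ω := subset_closure hy₀Ω
  set M : ℝ := ⨆ y : closure Ω, |w 0 (y : EuclideanSpace ℝ (Fin d))| with hMdef
  have hclK : IsCompact (closure Ω) := hΩbdd.isCompact_closure
  -- continuity of initial data
  have hcont0 : ContinuousOn (fun y => |w 0 y|) (closure Ω) := by
    have h1 : ContinuousOn (fun y : EuclideanSpace ℝ (Fin d) =>
        ((0:ℝ), y)) (closure Ω) := (Continuous.prodMk_right 0).continuousOn
    exact (hw.continuousOn.comp h1 (fun y hy => ⟨⟨le_refl 0, hT.le⟩, hy⟩)).abs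
  have hbdd : BddAbove (Set.range fun y : closure Ω =>
      |w 0 (y : EuclideanSpace ℝ (Fin d))|) := by
    have h := hclK.bddAbove_image hcont0
    have : (Set.range fun y : closure Ω => |w 0 (y : EuclideanSpace ℝ (Fin d))|)
        = (fun y => |w 0 y|) '' closure Ω := by
      ext r
      simp [Set.mem_image]
    rwa [this]
  have hMle : ∀ y ∈ closure Ω, |w 0 y| ≤ M := fun y hy =>
    le_ciSup hbdd (⟨y, hy⟩ : closure Ω)
  have hM0 : 0 ≤ M := le_trans (abs_nonneg _) (hMle y₀ hy₀)
  -- main step: for each ε > 0, w t x - ε t ≤ M on [0,T] × closure Ω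
  have main : ∀ ε : ℝ, 0 < ε → ∀ t ∈ Icc 0 T, ∀ x ∈ closure Ω,
      w t x - ε * t ≤ M := by
    intro ε hε t ht x hx
    set K : Set (ℝ × EuclideanSpace ℝ (Fin d)) := Icc 0 T ×ˢ closure Ω with hKdef
    set v : ℝ × EuclideanSpace ℝ (Fin d) → ℝ := fun p => w p.1 p.2 - ε * p.1 with hvdef
    have hKc : IsCompact K := isCompact_Icc.prod hclK
    have hKne : K.Nonempty := ⟨(0, y₀), ⟨⟨le_refl 0, hT.le⟩, hy₀⟩⟩
    have hvcont : ContinuousOn v K :=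
      hw.continuousOn.sub ((continuous_const.mul continuous_fst).continuousOn)
    obtain ⟨p₀, hp₀K, hmax⟩ := hKc.exists_isMaxOn hKne hvcont
    obtain ⟨⟨ht₀0, ht₀T⟩, hx₀cl⟩ := hp₀K
    have htx : (t, x) ∈ K := ⟨ht, hx⟩
    have hwtx : v (t, x) ≤ v p₀ := hmax htx
    suffices hvM : v p₀ ≤ M by
      calc w t x - ε * t = v (t, x) := rfl
        _ ≤ v p₀ := hwtx
        _ ≤ M := hvM
    rcases eq_or_lt_of_le ht₀0 with h0 | h0
    · -- t₀ = 0
      have : v p₀ = w 0 p₀.2 - ε * 0 := by rw [hvdef]; simp [← h0]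
      rw [this]
      have := le_trans (le_abs_self _) (hMle p₀.2 hx₀cl)
      linarith
    by_cases hfr : p₀.2 ∈ frontier Ω
    · -- boundary point
      have hz : w p₀.1 p₀.2 = 0 := hw.boundary p₀.1 ⟨ht₀0, ht₀T⟩ p₀.2 hfr
      have : v p₀ = -(ε * p₀.1) := by rw [hvdef]; simp [hz]
      rw [this]
      nlinarith
    · -- interior max: contradiction
      exfalso
      have hΩx : p₀.2 ∈ Ω := by
        have h5 : p₀.2 ∈ interior Ω := by
          rw [← closure_diff_frontier]
          exact ⟨hx₀cl, hfr⟩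
        rwa [hΩopen.interior_eq] at h5
      -- time derivative at the max is ≥ 0
      have hderiv := hw.heat_eq p₀.1 ⟨h0, ht₀T⟩ p₀.2 hΩx
      set c := a * heatLaplacian (w p₀.1) p₀.2 with hc
      have hf : HasDerivAt (fun τ => w τ p₀.2 - ε * τ) (c - ε) p₀.1 := by
        exact (hderiv.sub ((hasDerivAt_id p₀.1).const_mul ε)).congr_deriv (by ring)
      have hB : 0 ≤ c - ε := by
        rw [hasDerivAt_iff_tendsto_slope] at hf
        have h1 : Filter.Tendsto (slope (fun τ => w τ p₀.2 - ε * τ) p₀.1)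
            (nhdsWithin p₀.1 (Iio p₀.1)) (nhds (c - ε)) :=
          hf.mono_left (nhdsWithin_mono _ fun s hs => ne_of_lt hs)
        refine ge_of_tendsto h1 ?_
        filter_upwards [Ioo_mem_nhdsLT_of_mem
          (⟨h0, le_refl _⟩ : p₀.1 ∈ Ioc 0 p₀.1)] with s hs
        have hsK : (s, p₀.2) ∈ K := ⟨⟨hs.1.le, le_trans hs.2.le ht₀T⟩, hx₀cl⟩
        have hle := hmax hsK
        simp only [hvdef, Set.mem_setOf_eq] at hle
        rw [slope_def_field]
        apply div_nonneg_of_nonpos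
        · linarith
        · linarith [hs.2]
      -- spatial: Laplacian at the max is ≤ 0
      obtain ⟨U, hUnh, hUsm⟩ := hw.space_smooth p₀.1 ⟨h0, ht₀T⟩ p₀.2 hΩx
      have hlocmax : IsLocalMax (w p₀.1) p₀.2 := by
        filter_upwards [hΩopen.mem_nhds hΩx] with y hy
        have hle := hmax (⟨⟨ht₀0, ht₀T⟩, subset_closure hy⟩ : (p₀.1, y) ∈ K)
        simp only [hvdef, Set.mem_setOf_eq] at hle
        linarith
      have hA := heatLaplacian_nonpos_of_isLocalMax hUnh hUsm hlocmax
      nlinarith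
  -- conclude
  intro t ht x hx
  have h1 : ∀ ε : ℝ, 0 < ε → w t x ≤ M + ε := by
    intro ε hε
    have h2 := main (ε / T) (div_pos hε hT) t ht x hx
    have h3 : ε / T * t ≤ ε := by
      have h4 : ε / T * t ≤ ε / T * T :=
        mul_le_mul_of_nonneg_left ht.2 (div_pos hε hT).le
      rwa [div_mul_cancel₀ _ (ne_of_gt hT)] at h4
    linarith
  exact le_of_forall_pos_le_add h1

lemma IsClassicalHeatSolution.neg {d : ℕ} {Ω : Set (EuclideanSpace ℝ (Fin d))} {a T : ℝ}
    {w : ℝ → EuclideanSpace ℝ (Fin d) → ℝ} (hw : IsClassicalHeatSolution Ω a T w) :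
    IsClassicalHeatSolution Ω a T (fun t x => -(w t x)) where
  continuousOn := hw.continuousOn.neg
  space_smooth := by
    intro t ht x hx
    obtain ⟨U, hU, hsm⟩ := hw.space_smooth t ht x hx
    exact ⟨U, hU, hsm.neg⟩
  heat_eq := by
    intro t ht x hx
    have h := (hw.heat_eq t ht x hx).neg
    have heq : a * heatLaplacian (fun y => -(w t y)) x = -(a * heatLaplacian (w t) x) := by
      rw [heatLaplacian_neg]
      ring
    rw [heq]
    exact h
  boundary := by
    intro t ht x hx
    rw [hw.boundary t ht x hx, neg_zero]

/-- Maximum principle for the heat equation: the solution is bounded pointwise on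
`[0,T] × closure Ω` by the sup norm of the initial data. -/
theorem heat_maximum_principle {d : ℕ} (hd : 0 < d)
    (Ω : Set (EuclideanSpace ℝ (Fin d))) (hΩopen : IsOpen Ω)
    (hΩbdd : Bornology.IsBounded Ω) (hΩne : Ω.Nonempty)
    (a T : ℝ) (ha : 0 < a) (hT : 0 < T)
    (w : ℝ → EuclideanSpace ℝ (Fin d) → ℝ)
    (hw : IsClassicalHeatSolution Ω a T w) :
    ∀ t ∈ Icc 0 T, ∀ x ∈ closure Ω,
      |w t x| ≤ ⨆ y : closure Ω, |w 0 (y : EuclideanSpace ℝ (Fin d))| := by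
  intro t ht x hx
  have h1 := heat_max_principle_one_sided Ω hΩopen hΩbdd hΩne a T ha hT w hw t ht x hx
  have h2 := heat_max_principle_one_sided Ω hΩopen hΩbdd hΩne a T ha hT
    (fun t x => -(w t x)) hw.neg t ht x hx
  have heq : (⨆ y : closure Ω, |(fun t x => -(w t x)) 0 (y : EuclideanSpace ℝ (Fin d))|)
      = ⨆ y : closure Ω, |w 0 (y : EuclideanSpace ℝ (Fin d))| := by
    congr 1
    funext y
    simp [abs_neg]
  rw [heq] at h2
  exact abs_le.mpr ⟨by linarith, h1⟩
end

section
/- Let w₁ and w₂ be classical solutions of the homogeneous heat equation with homogeneous Dirichlet boundary conditions on a nonempty bounded open set Ω ⊂ ℝ^d over [0,T] with the same diffusion coefficient a > 0, and suppose w₁(0,x) = w₂(0,x) for every x in the closure of Ω. Then w₁(t,x) = w₂(t,x) for every t ∈ [0,T] and every x in the closure of Ω. -/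
open Set

open Filter Topology

/-- Second derivative test direction: at an interior local maximum the second
derivative is nonpositive. -/
lemma second_deriv_nonpos_of_isLocalMax {φ ψ : ℝ → ℝ} {c : ℝ}
    (hmax : IsLocalMax φ 0)
    (hd : ∀ᶠ s in 𝓝 (0 : ℝ), HasDerivAt φ (ψ s) s)
    (hd2 : HasDerivAt ψ c 0) : c ≤ 0 := by
  by_contra hc
  push_neg at hc
  have hψ0 : ψ 0 = 0 := hmax.hasDerivAt_eq_zero hd.self_of_nhds
  have hslope : Tendsto (slope ψ 0) (𝓝[≠] (0:ℝ)) (𝓝 c) :=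
    hasDerivAt_iff_tendsto_slope.1 hd2
  have h1 : ∀ᶠ s in 𝓝[>] (0:ℝ), 0 < ψ s := by
    have hsub : 𝓝[>] (0:ℝ) ≤ 𝓝[≠] (0:ℝ) :=
      nhdsWithin_mono _ (fun s hs => ne_of_gt hs)
    have := (hslope.mono_left hsub).eventually (eventually_gt_nhds hc)
    filter_upwards [this, self_mem_nhdsWithin] with s hs hs'
    have hsl : slope ψ 0 s = ψ s / s := by
      simp [slope_def_field, hψ0]
    rw [hsl] at hs
    have : 0 < ψ s / s * s := mul_pos hs hs'
    rwa [div_mul_cancel₀] at this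
    exact ne_of_gt hs'
  rw [eventually_nhdsWithin_iff] at h1
  obtain ⟨δ, hδ, hP⟩ := Metric.eventually_nhds_iff.1 ((hd.and hmax).and h1)
  set r := δ / 2 with hr
  have hrpos : 0 < r := by positivity
  have hmono : StrictMonoOn φ (Icc 0 r) := by
    apply strictMonoOn_of_deriv_pos (convex_Icc _ _)
    · intro s hs
      have : |s| < δ := by
        rw [abs_lt]; constructor <;> [linarith [hs.1]; linarith [hs.2, half_lt_self hδ]]
      exact ((hP (by simpa [Real.dist_eq] using this)).1.1).continuousAt.continuousWithinAt
    · intro s hs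
      rw [interior_Icc] at hs
      have habs : |s| < δ := by
        rw [abs_lt]; constructor <;> [linarith [hs.1]; linarith [hs.2, half_lt_self hδ]]
      have h := hP (by simpa [Real.dist_eq] using habs)
      rw [h.1.1.deriv]
      exact h.2 hs.1
  have hrδ : |r| < δ := by rw [abs_of_pos hrpos]; linarith [half_lt_self hδ]
  have := hmono (left_mem_Icc.2 hrpos.le) (right_mem_Icc.2 hrpos.le) hrpos
  have hle : φ r ≤ φ 0 := (hP (by simpa [Real.dist_eq] using hrδ)).1.2
  linarith

/-- At a maximum over `[0,T]` attained at `t₀ > 0`, the derivative is nonnegative. -/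
lemma deriv_nonneg_of_isMaxOn_Icc {g : ℝ → ℝ} {g' t₀ T : ℝ}
    (hmax : IsMaxOn g (Icc 0 T) t₀) (hg : HasDerivAt g g' t₀)
    (ht₀ : 0 < t₀) (htT : t₀ ≤ T) : 0 ≤ g' := by
  have hmem : (-1 : ℝ) ∈ posTangentConeAt (Icc 0 T) t₀ := by
    apply mem_posTangentConeAt_of_frequently_mem
    apply Eventually.frequently
    filter_upwards [Ioo_mem_nhdsGT_of_mem (left_mem_Ico.2 ht₀)] with s hs
    constructor
    · simp only [smul_eq_mul]; linarith [hs.1, hs.2]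
    · simp only [smul_eq_mul]; linarith [hs.1, hs.2]
  have h := hmax.localize.hasFDerivWithinAt_nonpos hg.hasFDerivAt.hasFDerivWithinAt hmem
  simpa using h

/-- The `heatLaplacian` is additive under subtraction of `C²` functions. -/
lemma heatLaplacian_sub {d : ℕ} {f g : EuclideanSpace ℝ (Fin d) → ℝ}
    {x : EuclideanSpace ℝ (Fin d)}
    (hf : ContDiffAt ℝ 2 f x) (hg : ContDiffAt ℝ 2 g x) :
    heatLaplacian (fun y => f y - g y) x = heatLaplacian f x - heatLaplacian g x := by
  unfold heatLaplacian
  rw [← Finset.sum_sub_distrib]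
  apply Finset.sum_congr rfl
  intro i _
  set e := EuclideanSpace.single i (1 : ℝ)
  have hfl : ∀ᶠ y in 𝓝 x, DifferentiableAt ℝ f y := by
    filter_upwards [hf.eventually (by norm_num)] with y hy
    exact hy.differentiableAt (by norm_num)
  have hgl : ∀ᶠ y in 𝓝 x, DifferentiableAt ℝ g y := by
    filter_upwards [hg.eventually (by norm_num)] with y hy
    exact hy.differentiableAt (by norm_num)
  have heq : (fun y => fderiv ℝ (fun z => f z - g z) y e)
      =ᶠ[𝓝 x] (fun y => fderiv ℝ f y e - fderiv ℝ g y e) := by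
    filter_upwards [hfl, hgl] with y hfy hgy
    rw [fderiv_fun_sub hfy hgy]; rfl
  rw [heq.fderiv_eq]
  have hFf : DifferentiableAt ℝ (fun y => fderiv ℝ f y e) x :=
    ((hf.fderiv_right (m := 1) (by norm_num)).clm_apply contDiffAt_const).differentiableAt
      (by norm_num)
  have hFg : DifferentiableAt ℝ (fun y => fderiv ℝ g y e) x :=
    ((hg.fderiv_right (m := 1) (by norm_num)).clm_apply contDiffAt_const).differentiableAt
      (by norm_num)
  rw [fderiv_fun_sub hFf hFg]; rfl

/-- At an interior local maximum of a `C²` function, the Laplacian is nonpositive. -/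
lemma heatLaplacian_nonpos_of_isLocalMax_s1 {d : ℕ} {h : EuclideanSpace ℝ (Fin d) → ℝ}
    {x₀ : EuclideanSpace ℝ (Fin d)}
    (hC2 : ContDiffAt ℝ 2 h x₀) (hmax : IsLocalMax h x₀) :
    heatLaplacian h x₀ ≤ 0 := by
  unfold heatLaplacian
  apply Finset.sum_nonpos
  intro i _
  set e := EuclideanSpace.single i (1 : ℝ) with he
  set L : ℝ → EuclideanSpace ℝ (Fin d) := fun s => x₀ + s • e with hL
  have hLcont : Continuous L := by continuity
  have hL0 : L 0 = x₀ := by simp [hL]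
  have hLtendsto : Tendsto L (𝓝 0) (𝓝 x₀) := by
    rw [← hL0]; exact hLcont.tendsto 0
  set φ : ℝ → ℝ := fun s => h (L s) with hφ
  set ψ : ℝ → ℝ := fun s => fderiv ℝ h (L s) e with hψ
  have hdiffev : ∀ᶠ y in 𝓝 x₀, DifferentiableAt ℝ h y := by
    filter_upwards [hC2.eventually (by norm_num)] with y hy
    exact hy.differentiableAt (by norm_num)
  have hLd : ∀ s : ℝ, HasDerivAt L e s := by
    intro s
    simpa [hL] using ((hasDerivAt_id s).smul_const e).const_add x₀
  have hd : ∀ᶠ s in 𝓝 (0:ℝ), HasDerivAt φ (ψ s) s := by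
    filter_upwards [hLtendsto.eventually hdiffev] with s hs
    exact hs.hasFDerivAt.comp_hasDerivAt s (hLd s)
  have hFd : DifferentiableAt ℝ (fun y => fderiv ℝ h y e) x₀ :=
    ((hC2.fderiv_right (m := 1) (by norm_num)).clm_apply contDiffAt_const).differentiableAt
      (by norm_num)
  have hd2 : HasDerivAt ψ (fderiv ℝ (fun y => fderiv ℝ h y e) x₀ e) 0 := by
    have hF : HasFDerivAt (fun y => fderiv ℝ h y e)
        (fderiv ℝ (fun y => fderiv ℝ h y e) x₀) (L 0) := by
      rw [hL0]; exact hFd.hasFDerivAt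
    exact hF.comp_hasDerivAt 0 (hLd 0)
  have hmaxφ : IsLocalMax φ 0 := by
    filter_upwards [hLtendsto.eventually hmax] with s hs
    simpa [hφ, hL0] using hs
  exact second_deriv_nonpos_of_isLocalMax hmaxφ hd hd2

/-- The weak maximum principle: a classical solution vanishing at time `0` and on the
boundary is nonpositive. -/
lemma heat_max_principle {d : ℕ} {Ω : Set (EuclideanSpace ℝ (Fin d))} (hΩopen : IsOpen Ω)
    (hΩbdd : Bornology.IsBounded Ω) {a T : ℝ} (ha : 0 < a) (hT : 0 < T)
    {u : ℝ → EuclideanSpace ℝ (Fin d) → ℝ}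
    (hu : IsClassicalHeatSolution Ω a T u)
    (h0 : ∀ x ∈ closure Ω, u 0 x = 0) :
    ∀ t ∈ Icc 0 T, ∀ x ∈ closure Ω, u t x ≤ 0 := by
  intro t ht x hx
  set K := Icc 0 T ×ˢ closure Ω with hK
  have hKc : IsCompact K := isCompact_Icc.prod hΩbdd.isCompact_closure
  have hKne : K.Nonempty := ⟨(0, x), ⟨left_mem_Icc.2 hT.le, hx⟩⟩
  have key : ∀ ε > 0, u t x - ε * t ≤ 0 := by
    intro ε hε
    set v : ℝ × EuclideanSpace ℝ (Fin d) → ℝ := fun p => u p.1 p.2 - ε * p.1 with hv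
    have hvc : ContinuousOn v K :=
      hu.continuousOn.sub ((continuous_const.mul continuous_fst).continuousOn)
    obtain ⟨⟨t₀, x₀⟩, hp₀K, hp₀max⟩ := hKc.exists_isMaxOn hKne hvc
    obtain ⟨ht₀, hx₀⟩ := hp₀K
    have hle : v (t, x) ≤ v (t₀, x₀) := hp₀max (⟨ht, hx⟩ : (t, x) ∈ K)
    suffices hvle : v (t₀, x₀) ≤ 0 by
      calc u t x - ε * t = v (t, x) := rfl
        _ ≤ 0 := le_trans hle hvle
    by_contra hpos
    push_neg at hpos
    have hx₀Ω : x₀ ∈ Ω := by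
      by_contra hxx
      have hfr : x₀ ∈ frontier Ω := by
        rw [hΩopen.frontier_eq]; exact ⟨hx₀, hxx⟩
      have hb := hu.boundary t₀ ht₀ x₀ hfr
      have hveq : v (t₀, x₀) = -(ε * t₀) := by simp [hv, hb]
      nlinarith [ht₀.1]
    have ht₀pos : 0 < t₀ := by
      rcases eq_or_lt_of_le ht₀.1 with h | h
      · exfalso
        have hz := h0 x₀ hx₀
        have hveq : v (t₀, x₀) = 0 := by
          simp only [hv]
          rw [show t₀ = 0 from h.symm, hz]; ring
        linarith
      · exact h
    have htIoc : t₀ ∈ Ioc 0 T := ⟨ht₀pos, ht₀.2⟩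
    have hgd : HasDerivAt (fun τ => u τ x₀ - ε * τ)
        (a * heatLaplacian (u t₀) x₀ - ε) t₀ := by
      have h1 := hu.heat_eq t₀ htIoc x₀ hx₀Ω
      have h2 : HasDerivAt (fun τ : ℝ => ε * τ) ε t₀ := by
        simpa using (hasDerivAt_id t₀).const_mul ε
      exact h1.sub h2
    have hgmax : IsMaxOn (fun τ => u τ x₀ - ε * τ) (Icc 0 T) t₀ := by
      intro τ hτ
      exact hp₀max (⟨hτ, hx₀⟩ : (τ, x₀) ∈ K)
    have hder : 0 ≤ a * heatLaplacian (u t₀) x₀ - ε :=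
      deriv_nonneg_of_isMaxOn_Icc hgmax hgd ht₀pos ht₀.2
    obtain ⟨U, hU, hC2U⟩ := hu.space_smooth t₀ htIoc x₀ hx₀Ω
    have hC2 : ContDiffAt ℝ 2 (u t₀) x₀ := hC2U.contDiffAt hU
    have hlmax : IsLocalMax (u t₀) x₀ := by
      filter_upwards [hΩopen.mem_nhds hx₀Ω] with y hy
      have h5 : u t₀ y - ε * t₀ ≤ u t₀ x₀ - ε * t₀ :=
        hp₀max (⟨ht₀, subset_closure hy⟩ : (t₀, y) ∈ K)
      linarith
    have hΔ := heatLaplacian_nonpos_of_isLocalMax_s1 hC2 hlmax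
    nlinarith
  rcases eq_or_lt_of_le ht.1 with h | h
  · rw [← h]; exact le_of_eq (h0 x hx)
  · by_contra hpos
    push_neg at hpos
    have hk := key (u t x / (2 * t)) (by positivity)
    have heq : u t x / (2 * t) * t = u t x / 2 := by
      field_simp
    rw [heq] at hk
    linarith

/-- The difference of two classical solutions is a classical solution. -/
lemma IsClassicalHeatSolution.sub {d : ℕ} {Ω : Set (EuclideanSpace ℝ (Fin d))} {a T : ℝ}
    {w₁ w₂ : ℝ → EuclideanSpace ℝ (Fin d) → ℝ}
    (hw₁ : IsClassicalHeatSolution Ω a T w₁) (hw₂ : IsClassicalHeatSolution Ω a T w₂) :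
    IsClassicalHeatSolution Ω a T (fun t x => w₁ t x - w₂ t x) where
  continuousOn := hw₁.continuousOn.sub hw₂.continuousOn
  space_smooth := by
    intro t ht x hx
    obtain ⟨U₁, hU₁, h₁⟩ := hw₁.space_smooth t ht x hx
    obtain ⟨U₂, hU₂, h₂⟩ := hw₂.space_smooth t ht x hx
    exact ⟨U₁ ∩ U₂, Filter.inter_mem hU₁ hU₂,
      (h₁.mono inter_subset_left).sub (h₂.mono inter_subset_right)⟩
  heat_eq := by
    intro t ht x hx
    obtain ⟨U₁, hU₁, h₁⟩ := hw₁.space_smooth t ht x hx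
    obtain ⟨U₂, hU₂, h₂⟩ := hw₂.space_smooth t ht x hx
    have hC1 : ContDiffAt ℝ 2 (w₁ t) x := h₁.contDiffAt hU₁
    have hC2 : ContDiffAt ℝ 2 (w₂ t) x := h₂.contDiffAt hU₂
    have hsub := (hw₁.heat_eq t ht x hx).sub (hw₂.heat_eq t ht x hx)
    have hL : heatLaplacian (fun y => w₁ t y - w₂ t y) x
        = heatLaplacian (w₁ t) x - heatLaplacian (w₂ t) x := heatLaplacian_sub hC1 hC2
    rw [hL]
    ring_nf
    ring_nf at hsub
    exact hsub
  boundary := by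
    intro t ht x hx
    rw [hw₁.boundary t ht x hx, hw₂.boundary t ht x hx, sub_self]

/-- Uniqueness of classical solutions of the homogeneous heat equation with homogeneous
Dirichlet boundary conditions: two solutions with the same initial data coincide. -/
theorem heat_uniqueness {d : ℕ} (hd : 0 < d)
    (Ω : Set (EuclideanSpace ℝ (Fin d))) (hΩopen : IsOpen Ω)
    (hΩbdd : Bornology.IsBounded Ω) (hΩne : Ω.Nonempty)
    (a T : ℝ) (ha : 0 < a) (hT : 0 < T)
    (w₁ w₂ : ℝ → EuclideanSpace ℝ (Fin d) → ℝ)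
    (hw₁ : IsClassicalHeatSolution Ω a T w₁)
    (hw₂ : IsClassicalHeatSolution Ω a T w₂)
    (h0 : ∀ x ∈ closure Ω, w₁ 0 x = w₂ 0 x) :
    ∀ t ∈ Icc 0 T, ∀ x ∈ closure Ω, w₁ t x = w₂ t x := by
  intro t ht x hx
  have h1 := heat_max_principle hΩopen hΩbdd ha hT (hw₁.sub hw₂)
    (fun y hy => by rw [h0 y hy, sub_self]) t ht x hx
  have h2 := heat_max_principle hΩopen hΩbdd ha hT (hw₂.sub hw₁)
    (fun y hy => by rw [h0 y hy, sub_self]) t ht x hx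
  linarith
end

section
/- Suppose Φ : C([a,b];X) → C([a,b];X) satisfies both (i) ‖Φ(v)(t)‖ ≤ ψ + ∫_a^t L(s)·‖v(s)‖ ds for every v ∈ B and every t ∈ [a,b], and (ii) ‖Φ(v₁)(t) − Φ(v₂)(t)‖ ≤ ∫_a^t L(s)·‖v₁(s) − v₂(s)‖ ds for all v₁, v₂ ∈ B and all t ∈ [a,b]. If condition (★) holds, i.e. 1 + δ·∫_a^b L(s) ds ≤ δ, then Φ has a unique fixed point ρ in B. -/
open Set MeasureTheory intervalIntegral

lemma integral_bound_aux {a b t : ℝ} (ht : t ∈ Icc a b)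
    {L : ℝ → ℝ} (hL0 : ∀ s, 0 ≤ L s) (hLint : IntervalIntegrable L volume a b)
    {c : ℝ → ℝ} (hc : Continuous c) {D : ℝ} (hD : 0 ≤ D) (hcD : ∀ s, c s ≤ D) :
    ∫ s in a..t, L s * c s ≤ (∫ s in a..b, L s) * D := by
  have hLt : IntervalIntegrable L volume a t :=
    hLint.mono_set (uIcc_subset_uIcc left_mem_uIcc (Icc_subset_uIcc ht))
  have h1 : ∫ s in a..t, L s * c s ≤ ∫ s in a..t, L s * D :=
    integral_mono_on ht.1 (hLt.mul_continuousOn hc.continuousOn) (hLt.mul_const D)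
      fun s _ => mul_le_mul_of_nonneg_left (hcD s) (hL0 s)
  have h3 : ∫ s in a..t, L s ≤ ∫ s in a..b, L s :=
    integral_mono_interval le_rfl ht.1 ht.2 (Filter.Eventually.of_forall fun s => hL0 s) hLint
  calc ∫ s in a..t, L s * c s ≤ ∫ s in a..t, L s * D := h1
    _ = (∫ s in a..t, L s) * D := by rw [intervalIntegral.integral_mul_const]
    _ ≤ (∫ s in a..b, L s) * D := mul_le_mul_of_nonneg_right h3 hD

/-- Banach fixed point argument: if `Φ : C([a,b];X) → C([a,b];X)` satisfies the mapping
estimate `‖Φ(v)(t)‖ ≤ ψ + ∫_a^t L(s)·‖v(s)‖ ds` on the closed ball `B` of radius `δψ`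
about zero, the contraction estimate
`‖Φ(v₁)(t) − Φ(v₂)(t)‖ ≤ ∫_a^t L(s)·‖v₁(s) − v₂(s)‖ ds` on `B`, and condition (★)
`1 + δ·∫_a^b L ≤ δ` holds, then `Φ` has a unique fixed point in `B`. -/
theorem fixed_point_of_star
    {X : Type*} [NormedAddCommGroup X] [NormedSpace ℝ X] [CompleteSpace X]
    (a b : ℝ) (hab : a < b)
    (L : ℝ → ℝ) (hL0 : ∀ s, 0 ≤ L s) (hLint : IntervalIntegrable L volume a b)
    (ψ δ : ℝ) (hψ : 0 < ψ) (hδ : 1 ≤ δ)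
    (Φ : C(Icc a b, X) → C(Icc a b, X))
    (hΦmap : ∀ v ∈ Metric.closedBall (0 : C(Icc a b, X)) (δ * ψ), ∀ t : Icc a b,
      ‖Φ v t‖ ≤ ψ + ∫ s in a..(t : ℝ), L s * ‖IccExtend hab.le (⇑v) s‖)
    (hΦlip : ∀ v₁ ∈ Metric.closedBall (0 : C(Icc a b, X)) (δ * ψ),
      ∀ v₂ ∈ Metric.closedBall (0 : C(Icc a b, X)) (δ * ψ), ∀ t : Icc a b,
      ‖Φ v₁ t - Φ v₂ t‖ ≤
        ∫ s in a..(t : ℝ), L s * ‖IccExtend hab.le (⇑v₁) s - IccExtend hab.le (⇑v₂) s‖)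
    (hstar : 1 + δ * ∫ s in a..b, L s ≤ δ) :
    ∃! ρ : C(Icc a b, X),
      ρ ∈ Metric.closedBall (0 : C(Icc a b, X)) (δ * ψ) ∧ Φ ρ = ρ := by
  set K : ℝ := ∫ s in a..b, L s with hKdef
  have hδpos : 0 < δ := lt_of_lt_of_le one_pos hδ
  have hK0 : 0 ≤ K := integral_nonneg hab.le fun s _ => hL0 s
  have hK1 : K < 1 := by nlinarith
  have hrad : 0 ≤ δ * ψ := le_of_lt (mul_pos hδpos hψ)
  -- the closed ball
  set S := Metric.closedBall (0 : C(Icc a b, X)) (δ * ψ) with hSdef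
  -- lipschitz estimate on the ball
  have key : ∀ v₁ ∈ S, ∀ v₂ ∈ S, dist (Φ v₁) (Φ v₂) ≤ K * dist v₁ v₂ := by
    intro v₁ h₁ v₂ h₂
    rw [ContinuousMap.dist_le (mul_nonneg hK0 dist_nonneg)]
    intro t
    rw [dist_eq_norm]
    refine (hΦlip v₁ h₁ v₂ h₂ t).trans ?_
    have hc : Continuous fun s => ‖IccExtend hab.le (⇑v₁) s - IccExtend hab.le (⇑v₂) s‖ :=
      ((v₁.continuous.Icc_extend').sub (v₂.continuous.Icc_extend')).norm
    refine integral_bound_aux t.2 hL0 hLint hc dist_nonneg fun s => ?_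
    have : IccExtend hab.le (⇑v₁) s - IccExtend hab.le (⇑v₂) s
        = v₁ (projIcc a b hab.le s) - v₂ (projIcc a b hab.le s) := rfl
    rw [this, ← dist_eq_norm]
    exact ContinuousMap.dist_apply_le_dist _
  -- Φ maps the ball to itself
  have hself : ∀ v ∈ S, Φ v ∈ S := by
    intro v hv
    rw [hSdef, Metric.mem_closedBall, dist_zero_right, ContinuousMap.norm_le _ hrad]
    intro t
    have hvn : ‖v‖ ≤ δ * ψ := by
      rw [← dist_zero_right]; exact hv
    have hc : Continuous fun s => ‖IccExtend hab.le (⇑v) s‖ := v.continuous.Icc_extend'.norm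
    have hb : ∫ s in a..(t : ℝ), L s * ‖IccExtend hab.le (⇑v) s‖ ≤ K * (δ * ψ) :=
      integral_bound_aux t.2 hL0 hLint hc hrad fun s =>
        (ContinuousMap.norm_coe_le_norm v _).trans hvn
    have := (hΦmap v hv t).trans (by linarith : ψ + (∫ s in a..(t : ℝ), L s * ‖IccExtend hab.le (⇑v) s‖) ≤ ψ + K * (δ * ψ))
    nlinarith
  -- set up the restricted map on the complete ball
  haveI : Nonempty S := ⟨⟨0, Metric.mem_closedBall_self hrad⟩⟩
  haveI : CompleteSpace S := Metric.isClosed_closedBall.completeSpace_coe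
  let F : S → S := fun v => ⟨Φ v, hself v v.2⟩
  have hcontr : ContractingWith K.toNNReal F := by
    constructor
    · exact_mod_cast Real.toNNReal_lt_one.mpr hK1
    · refine LipschitzWith.of_dist_le_mul fun v₁ v₂ => ?_
      have := key v₁ v₁.2 v₂ v₂.2
      rw [Subtype.dist_eq, Subtype.dist_eq]
      calc dist (Φ v₁) (Φ v₂) ≤ K * dist (v₁ : C(Icc a b, X)) v₂ := this
        _ ≤ (K.toNNReal : ℝ) * dist (v₁ : C(Icc a b, X)) v₂ :=
            mul_le_mul_of_nonneg_right (Real.le_coe_toNNReal K) dist_nonneg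
  obtain ⟨ρ, hρ⟩ := hcontr.exists_fixedPoint (Classical.arbitrary S) (edist_ne_top _ _)
  have hfix : Φ (ρ : C(Icc a b, X)) = ρ := congrArg Subtype.val hρ.1
  refine ⟨ρ, ⟨ρ.2, hfix⟩, ?_⟩
  · rintro ρ' ⟨hρ'S, hρ'fix⟩
    have hd : dist ρ' (ρ : C(Icc a b, X)) ≤ K * dist ρ' (ρ : C(Icc a b, X)) := by
      have := key ρ' hρ'S ρ ρ.2
      rwa [hρ'fix, hfix] at this
    have : dist ρ' (ρ : C(Icc a b, X)) = 0 := by nlinarith [dist_nonneg (x := ρ') (y := (ρ : C(Icc a b, X)))]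
    exact dist_eq_zero.mp this
end

section
/- Let t₀ ∈ ℝ, let ψ > 0, let c : ℝ → ℝ be continuous and nonnegative, and let 𝓛 : ℝ × ℝ × ℝ → ℝ be continuous, nonnegative, and nondecreasing in its second and third arguments. For k > 0 define φ_k : [1,∞) → ℝ by φ_k(δ) := 1 + δ·(∫_{t₀}^{t₀+k} 𝓛(s, δψ + c(s), δψ + c(s)) ds − 1). Then there exists k₀ > 0 such that for every k with 0 < k ≤ k₀, the function φ_k has a root in [1,∞). (This is the lemma asserting that if the time step length k_m is small enough then φ_m has a root in [1,∞).) -/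
open MeasureTheory intervalIntegral

/-- If the time step length `k` is small enough then the function
`φ_k(δ) = 1 + δ·(∫_{t₀}^{t₀+k} 𝓛(s, δψ + c(s), δψ + c(s)) ds − 1)` has a root in
`[1,∞)`. -/
theorem phi_has_root_for_small_timestep
    (t₀ : ℝ) (ψ : ℝ) (hψ : 0 < ψ)
    (c : ℝ → ℝ) (hc_cont : Continuous c) (hc_nonneg : ∀ s, 0 ≤ c s)
    (𝓛 : ℝ → ℝ → ℝ → ℝ)
    (h𝓛_cont : Continuous fun p : ℝ × ℝ × ℝ => 𝓛 p.1 p.2.1 p.2.2)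
    (h𝓛_nonneg : ∀ s x y, 0 ≤ 𝓛 s x y)
    (h𝓛_mono₂ : ∀ s y, Monotone fun x => 𝓛 s x y)
    (h𝓛_mono₃ : ∀ s x, Monotone fun y => 𝓛 s x y) :
    ∃ k₀ > 0, ∀ k : ℝ, 0 < k → k ≤ k₀ →
      ∃ δ : ℝ, 1 ≤ δ ∧
        1 + δ * ((∫ s in t₀..(t₀ + k), 𝓛 s (δ * ψ + c s) (δ * ψ + c s)) - 1) = 0 := by
  -- the integrand as a function of (δ, s)
  set g : ℝ → ℝ → ℝ := fun δ s => 𝓛 s (δ * ψ + c s) (δ * ψ + c s) with hg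
  have hg_cont : Continuous (Function.uncurry g) := by
    have : Function.uncurry g = (fun p : ℝ × ℝ × ℝ => 𝓛 p.1 p.2.1 p.2.2) ∘
        (fun p : ℝ × ℝ => (p.2, p.1 * ψ + c p.2, p.1 * ψ + c p.2)) := rfl
    rw [this]
    apply h𝓛_cont.comp
    exact (continuous_snd).prodMk
      (((continuous_fst.mul continuous_const).add (hc_cont.comp continuous_snd)).prodMk
        ((continuous_fst.mul continuous_const).add (hc_cont.comp continuous_snd)))
  have hg_nonneg : ∀ δ s, 0 ≤ g δ s := fun δ s => h𝓛_nonneg _ _ _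
  -- a bound M for g 2 on [t₀, t₀ + 1]
  obtain ⟨M, hM⟩ : ∃ M, ∀ s ∈ Set.Icc t₀ (t₀ + 1), g 2 s ≤ M := by
    obtain ⟨M, hM⟩ := (isCompact_Icc (a := t₀) (b := t₀ + 1)).bddAbove_image
      ((hg_cont.comp (Continuous.prodMk_right 2)).continuousOn)
    exact ⟨M, fun s hs => hM ⟨s, hs, rfl⟩⟩
  have hM0 : 0 ≤ M := le_trans (hg_nonneg 2 t₀) (hM t₀ ⟨le_refl _, by linarith⟩)
  refine ⟨min 1 (1 / (2 * (M + 1))), lt_min one_pos (by positivity), ?_⟩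
  intro k hk hkk
  have hk1 : k ≤ 1 := hkk.trans (min_le_left _ _)
  have hkM : k ≤ 1 / (2 * (M + 1)) := hkk.trans (min_le_right _ _)
  -- φ as a function of δ
  set F : ℝ → ℝ := fun δ => 1 + δ * ((∫ s in t₀..(t₀ + k), g δ s) - 1) with hF
  have hF_cont : Continuous F := by
    have : Continuous fun δ => ∫ s in t₀..(t₀ + k), g δ s :=
      continuous_parametric_intervalIntegral_of_continuous' hg_cont t₀ (t₀ + k)
    exact continuous_const.add (continuous_id.mul (this.sub continuous_const))
  have hI1 : 0 ≤ ∫ s in t₀..(t₀ + k), g 1 s :=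
    intervalIntegral.integral_nonneg (by linarith) (fun s _ => hg_nonneg 1 s)
  have hF1 : 0 ≤ F 1 := by simp only [hF]; nlinarith
  have hI2 : (∫ s in t₀..(t₀ + k), g 2 s) ≤ k * M := by
    have : (∫ s in t₀..(t₀ + k), g 2 s) ≤ ∫ _s in t₀..(t₀ + k), M := by
      apply intervalIntegral.integral_mono_on (by linarith)
      · exact ((hg_cont.comp (Continuous.prodMk_right 2)).intervalIntegrable _ _)
      · exact intervalIntegrable_const
      · intro s hs
        exact hM s ⟨hs.1, hs.2.trans (by linarith)⟩
    simpa [mul_comm] using this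
  have hF2 : F 2 ≤ 0 := by
    have hkM' : k * M ≤ 1 / 2 := by
      rw [le_div_iff₀ (by positivity)] at hkM
      nlinarith
    simp only [hF]; nlinarith
  have h0 : (0 : ℝ) ∈ Set.Icc (F 2) (F 1) := ⟨hF2, hF1⟩
  obtain ⟨δ, hδmem, hδ⟩ := intermediate_value_Icc' (by norm_num : (1:ℝ) ≤ 2)
    hF_cont.continuousOn h0
  exact ⟨δ, hδmem.1, hδ⟩
end
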